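/- arXiv:2505.14606 — 2 statements merged into one kernel-verified Lean document; each statement's English description precedes it below -/
import Mathlib

section
/- Fix φ ∈ ℝⁿ. The vector ρ*(φ) = Lφ − t*(φ)·φ, where t*(φ) = (a + ½⟨φ, Lφ⟩)/(2β + ½‖φ‖²), is the unique global minimizer of the map ρ ↦ 𝓛(φ, ρ) over ℝⁿ; that is, 𝓛(φ, ρ*(φ)) ≤ 𝓛(φ, ρ) for all ρ ∈ ℝⁿ, with strict inequality whenever ρ ≠ ρ*(φ). -/
open scoped RealInnerProductSpace

/-- The loss 𝓛(φ, ρ) = β‖Lφ − ρ‖² + (a + ½⟨φ, ρ⟩)². -/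
noncomputable def loss {n : ℕ} (L : Matrix (Fin n) (Fin n) ℝ) (β a : ℝ)
    (φ ρ : EuclideanSpace ℝ (Fin n)) : ℝ :=
  β * ‖Matrix.toEuclideanLin L φ - ρ‖ ^ 2 + (a + (1 / 2) * ⟪φ, ρ⟫) ^ 2

/-- ρ*(φ) = Lφ − t*(φ)·φ is the unique global minimizer of ρ ↦ 𝓛(φ, ρ). -/
theorem inner_minimizer {n : ℕ} (hn : 0 < n) (L : Matrix (Fin n) (Fin n) ℝ)
    (hL : L.IsSymm) (β a : ℝ) (hβ : 0 < β) (φ : EuclideanSpace ℝ (Fin n)) :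
    (∀ ρ : EuclideanSpace ℝ (Fin n),
        loss L β a φ
          (Matrix.toEuclideanLin L φ -
            ((a + (1 / 2) * ⟪φ, Matrix.toEuclideanLin L φ⟫) /
              (2 * β + (1 / 2) * ‖φ‖ ^ 2)) • φ) ≤ loss L β a φ ρ) ∧
    (∀ ρ : EuclideanSpace ℝ (Fin n),
        ρ ≠ Matrix.toEuclideanLin L φ -
            ((a + (1 / 2) * ⟪φ, Matrix.toEuclideanLin L φ⟫) /
              (2 * β + (1 / 2) * ‖φ‖ ^ 2)) • φ →
        loss L β a φ
          (Matrix.toEuclideanLin L φ -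
            ((a + (1 / 2) * ⟪φ, Matrix.toEuclideanLin L φ⟫) /
              (2 * β + (1 / 2) * ‖φ‖ ^ 2)) • φ) < loss L β a φ ρ) := by
  set w : EuclideanSpace ℝ (Fin n) := Matrix.toEuclideanLin L φ with hw
  set t : ℝ := (a + (1 / 2) * ⟪φ, w⟫) / (2 * β + (1 / 2) * ‖φ‖ ^ 2) with htdef
  have hs : (0:ℝ) < 2 * β + (1 / 2) * ‖φ‖ ^ 2 := by positivity
  have ha : a = t * (2 * β + (1 / 2) * ⟪φ, φ⟫) - (1 / 2) * ⟪φ, w⟫ := by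
    rw [real_inner_self_eq_norm_sq, htdef, div_mul_cancel₀ _ (ne_of_gt hs)]
    ring
  clear_value t
  set ρs : EuclideanSpace ℝ (Fin n) := w - t • φ with hρs
  clear_value w
  have key : ∀ ρ : EuclideanSpace ℝ (Fin n), loss L β a φ ρ =
      loss L β a φ ρs + (β * ‖ρ - ρs‖ ^ 2 + ((1/2) * ⟪φ, ρ - ρs⟫) ^ 2) := by
    intro ρ
    unfold loss
    rw [← hw, ← real_inner_self_eq_norm_sq, ← real_inner_self_eq_norm_sq,
      ← real_inner_self_eq_norm_sq, hρs, ha]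
    simp only [inner_sub_left, inner_sub_right, inner_smul_left, inner_smul_right,
      RCLike.inner_apply, starRingEnd_apply, star_trivial]
    rw [real_inner_comm w φ, real_inner_comm ρ φ, real_inner_comm ρ w]
    ring
  constructor
  · intro ρ
    rw [key ρ]
    nlinarith [sq_nonneg ‖ρ - ρs‖, sq_nonneg ((1/2) * ⟪φ, ρ - ρs⟫)]
  · intro ρ hne
    rw [key ρ]
    have h1 : (0:ℝ) < ‖ρ - ρs‖ ^ 2 := pow_pos (norm_sub_pos_iff.mpr hne) 2
    nlinarith [sq_nonneg ((1/2) * ⟪φ, ρ - ρs⟫)]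
end

section
/- Fix φ ∈ ℝⁿ and set A(φ) = a + ½⟨φ, Lφ⟩ and ρ*(φ) = Lφ − t*(φ)·φ with t*(φ) = A(φ)/(2β + ½‖φ‖²). Then 𝓛(φ, ρ*(φ)) = A(φ)² · 4β/(4β + ‖φ‖²); in particular 𝓛(φ, ρ*(φ)) ≤ A(φ)², with equality if and only if A(φ) = 0 or φ = 0. -/
open scoped RealInnerProductSpace

/-- The reduced objective: 𝓛(φ, ρ*(φ)) = A(φ)²·4β/(4β + ‖φ‖²) ≤ A(φ)²,
with equality iff A(φ) = 0 or φ = 0. -/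
theorem reduced_objective {n : ℕ} (hn : 0 < n) (L : Matrix (Fin n) (Fin n) ℝ)
    (hL : L.IsSymm) (β a : ℝ) (hβ : 0 < β) (φ : EuclideanSpace ℝ (Fin n)) :
    loss L β a φ
        (Matrix.toEuclideanLin L φ -
          ((a + (1 / 2) * ⟪φ, Matrix.toEuclideanLin L φ⟫) /
            (2 * β + (1 / 2) * ‖φ‖ ^ 2)) • φ)
      = (a + (1 / 2) * ⟪φ, Matrix.toEuclideanLin L φ⟫) ^ 2 *
          (4 * β / (4 * β + ‖φ‖ ^ 2)) ∧
    loss L β a φ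
        (Matrix.toEuclideanLin L φ -
          ((a + (1 / 2) * ⟪φ, Matrix.toEuclideanLin L φ⟫) /
            (2 * β + (1 / 2) * ‖φ‖ ^ 2)) • φ)
      ≤ (a + (1 / 2) * ⟪φ, Matrix.toEuclideanLin L φ⟫) ^ 2 ∧
    (loss L β a φ
        (Matrix.toEuclideanLin L φ -
          ((a + (1 / 2) * ⟪φ, Matrix.toEuclideanLin L φ⟫) /
            (2 * β + (1 / 2) * ‖φ‖ ^ 2)) • φ)
      = (a + (1 / 2) * ⟪φ, Matrix.toEuclideanLin L φ⟫) ^ 2 ↔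
        a + (1 / 2) * ⟪φ, Matrix.toEuclideanLin L φ⟫ = 0 ∨ φ = 0) := by
  set A : ℝ := a + (1 / 2) * ⟪φ, Matrix.toEuclideanLin L φ⟫ with hA
  set s : ℝ := ‖φ‖ ^ 2 with hs
  have hs0 : 0 ≤ s := by positivity
  have hd : 2 * β + (1 / 2) * s ≠ 0 := by positivity
  have hd4 : 4 * β + s ≠ 0 := by positivity
  set t : ℝ := A / (2 * β + (1 / 2) * s) with ht
  have hres : Matrix.toEuclideanLin L φ - (Matrix.toEuclideanLin L φ - t • φ) = t • φ := by
    abel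
  have hnorm : ‖Matrix.toEuclideanLin L φ - (Matrix.toEuclideanLin L φ - t • φ)‖ ^ 2
      = t ^ 2 * s := by
    rw [hres, norm_smul, mul_pow, hs]
    simp [sq_abs]
  have hinner : ⟪φ, Matrix.toEuclideanLin L φ - t • φ⟫
      = ⟪φ, Matrix.toEuclideanLin L φ⟫ - t * s := by
    rw [inner_sub_right, inner_smul_right, real_inner_self_eq_norm_sq, hs]
  have hloss : loss L β a φ (Matrix.toEuclideanLin L φ - t • φ)
      = A ^ 2 * (4 * β / (4 * β + s)) := by
    rw [loss, hnorm, hinner]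
    have : a + 1 / 2 * (⟪φ, Matrix.toEuclideanLin L φ⟫ - t * s)
        = A - (1 / 2) * t * s := by rw [hA]; ring
    rw [this, ht]
    field_simp
    ring
  refine ⟨hloss, ?_, ?_⟩
  · rw [hloss]
    have h1 : 4 * β / (4 * β + s) ≤ 1 := by
      rw [div_le_one (by positivity)]; linarith
    nlinarith [sq_nonneg A]
  · rw [hloss]
    constructor
    · intro h
      by_cases hA0 : A = 0
      · exact Or.inl hA0
      · right
        have : (4 * β / (4 * β + s)) = 1 := by
          have hA2 : A ^ 2 ≠ 0 := pow_ne_zero _ hA0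
          have h' : A ^ 2 * (4 * β / (4 * β + s)) = A ^ 2 * 1 := by
            rw [mul_one]; exact h
          exact mul_left_cancel₀ hA2 h'
        have hs' : s = 0 := by
          rw [div_eq_one_iff_eq hd4] at this; linarith
        have := norm_eq_zero.mp (by nlinarith [norm_nonneg φ] : ‖φ‖ = 0)
        exact this
    · rintro (h | h)
      · rw [h]; ring
      · have : s = 0 := by rw [hs, h]; simp
        rw [this]
        field_simp
        ring
end
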